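/- For every τ₀ > ν(ν+1) - 1, the Lebesgue measure of the set of ω ∈ ℝ^ν with |ω| ≤ 1 for which there exists a nonzero integer vector p = (p_{ij})_{1≤i≤j≤ν} with |∑_{1≤i≤j≤ν} ω_i ω_j p_{ij}| < γ₀/|p|^{τ₀} is O(γ₀^{1/2}) as γ₀ → 0. Equivalently, the complement of the set of ω in the unit ball satisfying |∑_{1≤i≤j≤ν} ω_i ω_j p_{ij}| ≥ γ₀/|p|^{τ₀} for all nonzero integer p has measure at most C·γ₀^{1/2} for some constant C depending only on ν and τ₀. -/

import Mathlib

open MeasureTheory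

open scoped ENNReal

attribute [local instance 2000] Subtype.fintype

lemma my_abs_lt_of_sq_lt_sq {x δ : ℝ} (h : x ^ 2 < δ ^ 2) (hδ : 0 ≤ δ) : |x| < δ := by
  nlinarith [abs_nonneg x, sq_abs x]

lemma quad_sublevel (a b c ε : ℝ) (ha : a ≠ 0) :
    volume {t : ℝ | |a * t ^ 2 + b * t + c| < ε} ≤
      ENNReal.ofReal (4 * Real.sqrt (ε / |a|)) := by
  rcases le_or_gt ε 0 with hε | hε
  · have : {t : ℝ | |a * t ^ 2 + b * t + c| < ε} = ∅ := by
      ext t; simp only [Set.mem_setOf_eq, Set.mem_empty_iff_false, iff_false, not_lt]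
      exact le_trans hε (abs_nonneg _)
    simp [this]
  · have hapos : 0 < |a| := abs_pos.2 ha
    set r : ℝ := -b / (2 * a) with hr
    set u : ℝ := r ^ 2 - c / a with hu
    set δ : ℝ := Real.sqrt (ε / |a|) with hδ
    have hδpos : 0 < δ := Real.sqrt_pos.2 (div_pos hε hapos)
    have hδsq : δ ^ 2 = ε / |a| := Real.sq_sqrt (le_of_lt (div_pos hε hapos))
    have key : ∀ t : ℝ, a * t ^ 2 + b * t + c = a * ((t - r) ^ 2 - u) := by
      intro t; rw [hu, hr]; field_simp; ring
    have subset : {t : ℝ | |a * t ^ 2 + b * t + c| < ε} ⊆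
        {t : ℝ | |(t - r) ^ 2 - u| < δ ^ 2} := by
      intro t ht
      simp only [Set.mem_setOf_eq] at ht ⊢
      rw [key t, abs_mul] at ht
      rw [hδsq, lt_div_iff₀ hapos, mul_comm]
      exact ht
    refine le_trans (measure_mono subset) ?_
    have h4δ : ENNReal.ofReal (2 * δ) + ENNReal.ofReal (2 * δ)
        = ENNReal.ofReal (4 * δ) := by
      rw [← ENNReal.ofReal_add (by linarith) (by linarith)]; ring_nf
    rcases le_or_gt u 0 with hu0 | hu0
    · have subset2 : {t : ℝ | |(t - r) ^ 2 - u| < δ ^ 2} ⊆ Metric.ball r δ := by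
        intro t ht
        simp only [Set.mem_setOf_eq] at ht
        have h1 : (t - r) ^ 2 ≤ |(t - r) ^ 2 - u| := by
          rw [abs_of_nonneg (by nlinarith [sq_nonneg (t - r)])]; nlinarith
        have h2 : (t - r) ^ 2 < δ ^ 2 := lt_of_le_of_lt h1 ht
        have := my_abs_lt_of_sq_lt_sq h2 hδpos.le
        rw [Metric.mem_ball, Real.dist_eq]; exact this
      refine le_trans (measure_mono subset2) ?_
      rw [Real.volume_ball]
      exact ENNReal.ofReal_le_ofReal (by linarith)
    · set w : ℝ := Real.sqrt u with hw
      have hwsq : w ^ 2 = u := Real.sq_sqrt hu0.le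
      have subset2 : {t : ℝ | |(t - r) ^ 2 - u| < δ ^ 2} ⊆
          Metric.ball (r + w) δ ∪ Metric.ball (r - w) δ := by
        intro t ht
        simp only [Set.mem_setOf_eq] at ht
        have hfac : (t - r) ^ 2 - u = (t - (r + w)) * (t - (r - w)) := by
          rw [← hwsq]; ring
        rw [hfac, abs_mul] at ht
        by_contra hcon
        simp only [Set.mem_union, Metric.mem_ball, Real.dist_eq, not_or, not_lt] at hcon
        obtain ⟨h1, h2⟩ := hcon
        have : δ ^ 2 ≤ |t - (r + w)| * |t - (r - w)| := by nlinarith [abs_nonneg (t - (r + w))]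
        linarith
      refine le_trans (measure_mono subset2) ?_
      refine le_trans (measure_union_le _ _) ?_
      rw [Real.volume_ball, Real.volume_ball, h4δ]

def Qf {ν : ℕ} (p : Fin ν → Fin ν → ℤ) (x : Fin ν → ℝ) : ℝ :=
  ∑ i, ∑ j, if i ≤ j then (p i j : ℝ) * x i * x j else 0

lemma Qf_line {ν : ℕ} (p : Fin ν → Fin ν → ℤ) (α β : Fin ν → ℝ) :
    ∃ b c : ℝ, ∀ t : ℝ, Qf p (fun i => α i + β i * t) = Qf p β * t ^ 2 + b * t + c := by
  classical
  refine ⟨∑ i, ∑ j, (if i ≤ j then (p i j : ℝ) * (α i * β j + β i * α j) else 0),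
    Qf p α, fun t => ?_⟩
  have hterm : ∀ i j : Fin ν,
      (if i ≤ j then (p i j : ℝ) * (α i + β i * t) * (α j + β j * t) else 0)
        = (if i ≤ j then (p i j : ℝ) * β i * β j else 0) * t ^ 2
          + (if i ≤ j then (p i j : ℝ) * (α i * β j + β i * α j) else 0) * t
          + (if i ≤ j then (p i j : ℝ) * α i * α j else 0) := by
    intro i j; split <;> ring
  simp only [Qf]
  simp only [hterm, Finset.sum_add_distrib, ← Finset.sum_mul]

lemma Qf_support_single {ν : ℕ} (p : Fin ν → Fin ν → ℤ) (j₀ : Fin ν) (x : Fin ν → ℝ)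
    (hx : ∀ k, k ≠ j₀ → x k = 0) :
    Qf p x = (p j₀ j₀ : ℝ) * x j₀ ^ 2 := by
  classical
  have h1 : Qf p x = ∑ i ∈ {j₀}, ∑ j, (if i ≤ j then (p i j : ℝ) * x i * x j else 0) := by
    rw [Qf]
    refine (Finset.sum_subset (Finset.subset_univ _) ?_).symm
    intro i _ hi
    have hxi : x i = 0 := hx i (by simpa using hi)
    apply Finset.sum_eq_zero
    intro j _
    split <;> simp [hxi]
  rw [h1, Finset.sum_singleton]
  have h2 : ∑ j, (if j₀ ≤ j then (p j₀ j : ℝ) * x j₀ * x j else 0)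
      = ∑ j ∈ {j₀}, (if j₀ ≤ j then (p j₀ j : ℝ) * x j₀ * x j else 0) := by
    refine (Finset.sum_subset (Finset.subset_univ _) ?_).symm
    intro j _ hj
    have hxj : x j = 0 := hx j (by simpa using hj)
    split <;> simp [hxj]
  rw [h2, Finset.sum_singleton, if_pos le_rfl]
  ring

lemma Qf_support_pair {ν : ℕ} (p : Fin ν → Fin ν → ℤ) (i₀ j₀ : Fin ν) (h : i₀ < j₀)
    (x : Fin ν → ℝ) (hx : ∀ k, k ≠ i₀ → k ≠ j₀ → x k = 0) :
    Qf p x = (p i₀ i₀ : ℝ) * x i₀ ^ 2 + (p j₀ j₀ : ℝ) * x j₀ ^ 2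
      + (p i₀ j₀ : ℝ) * x i₀ * x j₀ := by
  classical
  have hne : i₀ ≠ j₀ := ne_of_lt h
  have h1 : Qf p x = ∑ i ∈ {i₀, j₀}, ∑ j, (if i ≤ j then (p i j : ℝ) * x i * x j else 0) := by
    rw [Qf]
    refine (Finset.sum_subset (Finset.subset_univ _) ?_).symm
    intro i _ hi
    simp only [Finset.mem_insert, Finset.mem_singleton, not_or] at hi
    have hxi : x i = 0 := hx i hi.1 hi.2
    apply Finset.sum_eq_zero
    intro j _
    split <;> simp [hxi]
  have h2 : ∀ i₁ : Fin ν, ∑ j, (if i₁ ≤ j then (p i₁ j : ℝ) * x i₁ * x j else 0)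
      = ∑ j ∈ {i₀, j₀}, (if i₁ ≤ j then (p i₁ j : ℝ) * x i₁ * x j else 0) := by
    intro i₁
    refine (Finset.sum_subset (Finset.subset_univ _) ?_).symm
    intro j _ hj
    simp only [Finset.mem_insert, Finset.mem_singleton, not_or] at hj
    have hxj : x j = 0 := hx j hj.1 hj.2
    split <;> simp [hxj]
  rw [h1]
  rw [Finset.sum_pair hne, h2 i₀, h2 j₀, Finset.sum_pair hne, Finset.sum_pair hne]
  rw [if_pos (le_refl i₀), if_pos (le_of_lt h), if_neg (not_le.2 h), if_pos (le_refl j₀)]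
  ring

attribute [local instance 2000] Subtype.fintype

lemma pi_slice_bound {ν : ℕ} (j₀ : Fin ν) (s : Set (Fin ν → ℝ)) (hs : MeasurableSet s)
    (hbox : ∀ x ∈ s, ∀ k, |x k| ≤ 2) (R : ℝ≥0∞)
    (hslice : ∀ Y : Fin ν → ℝ, volume {t : ℝ | Function.update Y j₀ t ∈ s} ≤ R) :
    volume s ≤ R * ENNReal.ofReal 4 ^ (ν - 1) := by
  classical
  set P : Fin ν → Prop := fun i => i = j₀ with hP
  haveI : DecidablePred P := fun i => inferInstanceAs (Decidable (i = j₀))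
  haveI huniq : Unique {i : Fin ν // P i} :=
    ⟨⟨⟨j₀, rfl⟩⟩, fun x => Subtype.ext x.2⟩
  set e := MeasurableEquiv.piEquivPiSubtypeProd (fun _ : Fin ν => ℝ) P with he
  have hMP := volume_preserving_piEquivPiSubtypeProd (fun _ : Fin ν => ℝ) P
  -- volume s = prod-volume of image
  have himg : volume s = volume (e.symm ⁻¹' s) := by
    exact ((hMP.symm e).measure_preimage_equiv s).symm
  rw [himg]
  have hmeas2 : MeasurableSet (e.symm ⁻¹' s) := e.symm.measurable hs
  rw [show (volume : Measure ((∀ _ : {i // P i}, ℝ) × (∀ _ : {i // ¬ P i}, ℝ)))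
      = Measure.prod volume volume from rfl]
  rw [Measure.prod_apply_symm hmeas2]
  -- pointwise bound of inner measure
  set box : Set (∀ _ : {i : Fin ν // ¬ P i}, ℝ) := Set.univ.pi fun _ => Set.Icc (-2 : ℝ) 2 with hbox'
  have hpoint : ∀ y, volume ((fun x => (x, y)) ⁻¹' (e.symm ⁻¹' s))
      ≤ box.indicator (fun _ => R) y := by
    intro y
    set Y : Fin ν → ℝ := fun i => if h : P i then 0 else y ⟨i, h⟩ with hY
    have hform : ∀ (z : ∀ _ : {i : Fin ν // P i}, ℝ),
        e.symm (z, y) = Function.update Y j₀ (z default) := by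
      intro z
      funext i
      simp only [he, MeasurableEquiv.piEquivPiSubtypeProd_symm_apply]
      by_cases h : P i
      · have : i = j₀ := h
        subst this
        simp only [dif_pos h, Function.update_self]
        congr 1
        exact (Subsingleton.elim _ _)
      · have : i ≠ j₀ := h
        rw [dif_neg h, Function.update_of_ne this]
        simp [hY, h]
    -- transfer to ℝ via piUnique
    have hPU := volume_preserving_piUnique (fun _ : {i : Fin ν // P i} => ℝ)
    set T : Set (∀ _ : {i : Fin ν // P i}, ℝ) := (fun x => (x, y)) ⁻¹' (e.symm ⁻¹' s) with hT
    have hTmeas : MeasurableSet T := measurable_prodMk_right hmeas2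
    set U : Set ℝ := {t : ℝ | Function.update Y j₀ t ∈ s} with hU
    have hTU : T = (MeasurableEquiv.piUnique (fun _ : {i : Fin ν // P i} => ℝ)) ⁻¹' U := by
      ext z
      simp only [hT, Set.mem_preimage, hU, Set.mem_setOf_eq, MeasurableEquiv.piUnique_apply]
      rw [hform z]
    have hUmeas : MeasurableSet U := by
      have := (MeasurableEquiv.piUnique (fun _ : {i : Fin ν // P i} => ℝ)).symm.measurable
        (hTU ▸ hTmeas)
      simpa [Set.preimage_preimage] using this
    have hvolT : volume T = volume U := by
      rw [hTU]
      exact hPU.measure_preimage_equiv U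
    by_cases hyb : y ∈ box
    · rw [Set.indicator_of_mem hyb]
      rw [hvolT]
      exact hslice Y
    · rw [Set.indicator_of_notMem hyb]
      -- slice is empty
      have : T = ∅ := by
        ext z
        simp only [hT, Set.mem_preimage, Set.mem_empty_iff_false, iff_false]
        intro hmem
        rw [hform z] at hmem
        apply hyb
        intro k _
        have hk : (k : Fin ν) ≠ j₀ := k.2
        have := hbox _ hmem k
        rw [Function.update_of_ne hk] at this
        have hYk : Y (k : Fin ν) = y k := by
          simp [hY, k.2]
        rw [hYk] at this
        exact abs_le.1 this
      rw [this]
      simp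
  refine le_trans (lintegral_mono hpoint) ?_
  rw [lintegral_indicator (by measurability)]
  rw [setLIntegral_const]
  have hvbox : volume box = ENNReal.ofReal 4 ^ (ν - 1) := by
    rw [hbox', volume_pi_pi]
    have : ∀ _ : {i : Fin ν // ¬ P i}, volume (Set.Icc (-2 : ℝ) 2) = ENNReal.ofReal 4 := by
      intro; rw [Real.volume_Icc]; norm_num
    rw [Finset.prod_congr rfl (fun i _ => this i), Finset.prod_const]
    congr 1
    simp only [Finset.card_univ]
    rw [Fintype.card_subtype_compl]
    simp [Fintype.card_subtype_eq]
  rw [hvbox]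

lemma update_eq_line {ν : ℕ} (Y : Fin ν → ℝ) (j₀ : Fin ν) (t : ℝ) :
    Function.update Y j₀ t = Function.update Y j₀ 0 + t • (Pi.single j₀ 1 : Fin ν → ℝ) := by
  funext i
  by_cases hi : i = j₀
  · subst hi; simp
  · simp [Function.update_of_ne hi, Pi.single_eq_of_ne hi]

lemma abs_intCast_natAbs (a : ℤ) : |(a : ℝ)| = (a.natAbs : ℝ) := by
  rw [Nat.cast_natAbs, Int.cast_abs]

lemma Qf_continuous {ν : ℕ} (p : Fin ν → Fin ν → ℤ) : Continuous (Qf p) := by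
  unfold Qf
  refine continuous_finset_sum _ fun i _ => continuous_finset_sum _ fun j _ => ?_
  by_cases h : i ≤ j
  · simp only [if_pos h]
    exact (continuous_const.mul (continuous_apply i)).mul (continuous_apply j)
  · simp only [if_neg h]; exact continuous_const

lemma Ap_measurable {ν : ℕ} (p : Fin ν → Fin ν → ℤ) (ε : ℝ) :
    MeasurableSet {x : Fin ν → ℝ | (∀ k, |x k| ≤ 1) ∧ |Qf p x| < ε} := by
  have h1 : MeasurableSet {x : Fin ν → ℝ | ∀ k, |x k| ≤ 1} := by
    have : {x : Fin ν → ℝ | ∀ k, |x k| ≤ 1} = ⋂ k, {x | |x k| ≤ 1} := by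
      ext x; simp [Set.mem_iInter]
    rw [this]
    exact MeasurableSet.iInter fun k =>
      measurableSet_le ((continuous_apply k).abs.measurable) measurable_const
  have h2 : MeasurableSet {x : Fin ν → ℝ | |Qf p x| < ε} :=
    (isOpen_lt (Qf_continuous p).abs continuous_const).measurableSet
  exact h1.inter h2

lemma Ap_pi_bound {ν : ℕ} (p : Fin ν → Fin ν → ℤ) (i₀ j₀ : Fin ν) (hle : i₀ ≤ j₀)
    (hN : ∀ i j, i ≤ j → (p i j).natAbs ≤ (p i₀ j₀).natAbs)
    (h0 : p i₀ j₀ ≠ 0) {ε : ℝ} (hε : 0 < ε) :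
    volume {x : Fin ν → ℝ | (∀ k, |x k| ≤ 1) ∧ |Qf p x| < ε} ≤
      ENNReal.ofReal (4 * Real.sqrt (ε / ((p i₀ j₀).natAbs : ℝ)))
        * ENNReal.ofReal 4 ^ (ν - 1) := by
  classical
  set N : ℝ := ((p i₀ j₀).natAbs : ℝ) with hNdef
  have hNpos : 0 < N := by
    simp only [hNdef]
    exact_mod_cast Nat.pos_of_ne_zero (Int.natAbs_ne_zero.2 h0)
  set s : Set (Fin ν → ℝ) := {x | (∀ k, |x k| ≤ 1) ∧ |Qf p x| < ε} with hsdef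
  have hs : MeasurableSet s := Ap_measurable p ε
  set R : ℝ≥0∞ := ENNReal.ofReal (4 * Real.sqrt (ε / N)) with hRdef
  -- generic helper to conclude from a 1D bound with |a| ≥ N
  have hquad : ∀ a b c : ℝ, N ≤ |a| →
      volume {t : ℝ | |a * t ^ 2 + b * t + c| < ε} ≤ R := by
    intro a b c haN
    have ha : a ≠ 0 := by
      intro h; rw [h] at haN; simp at haN; linarith
    refine le_trans (quad_sublevel a b c ε ha) ?_
    apply ENNReal.ofReal_le_ofReal
    have h1 : ε / |a| ≤ ε / N := div_le_div_of_nonneg_left hε.le hNpos haN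
    have := Real.sqrt_le_sqrt h1
    linarith
  rcases eq_or_lt_of_le hle with heq | hlt
  · -- diagonal case : slice directly along j₀
    subst heq
    refine le_trans (pi_slice_bound i₀ s hs
      (fun x hx k => le_trans (hx.1 k) (by norm_num)) R ?_) le_rfl
    intro Y
    set α : Fin ν → ℝ := Function.update Y i₀ 0 with hα
    set β : Fin ν → ℝ := Pi.single i₀ (1 : ℝ) with hβ
    obtain ⟨b, c, hbc⟩ := Qf_line p α β
    have ha : Qf p β = (p i₀ i₀ : ℝ) := by
      rw [Qf_support_single p i₀ β (fun k hk => Pi.single_eq_of_ne hk 1)]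
      simp [hβ]
    have habs : N ≤ |Qf p β| := by
      rw [ha, hNdef, abs_intCast_natAbs]
    refine le_trans (measure_mono ?_) (hquad (Qf p β) b c habs)
    intro t ht
    simp only [Set.mem_setOf_eq] at ht ⊢
    rw [← hbc t]
    have hupd : (fun i => α i + β i * t) = Function.update Y i₀ t := by
      rw [update_eq_line Y i₀ t]
      funext i; simp [hα, hβ, mul_comm]
    rw [hupd]
    exact ht.2
  · -- off-diagonal case : shear then slice
    have hne : i₀ ≠ j₀ := ne_of_lt hlt
    have habsN : |(p i₀ j₀ : ℝ)| = N := by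
      rw [hNdef, abs_intCast_natAbs]
    -- choose the sign
    obtain ⟨σ, hσ, hσa⟩ : ∃ σ : ℝ, (σ = 1 ∨ σ = -1) ∧
        N ≤ |(p i₀ i₀ : ℝ) + (p j₀ j₀ : ℝ) + σ * (p i₀ j₀ : ℝ)| := by
      by_contra hcon
      push_neg at hcon
      have h1 := hcon 1 (Or.inl rfl)
      have h2 := hcon (-1) (Or.inr rfl)
      have key : |(2 : ℝ) * (p i₀ j₀ : ℝ)| ≤
          |(p i₀ i₀ : ℝ) + (p j₀ j₀ : ℝ) + 1 * (p i₀ j₀ : ℝ)|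
          + |(p i₀ i₀ : ℝ) + (p j₀ j₀ : ℝ) + (-1) * (p i₀ j₀ : ℝ)| := by
        have heq2 : (2 : ℝ) * (p i₀ j₀ : ℝ)
            = ((p i₀ i₀ : ℝ) + (p j₀ j₀ : ℝ) + 1 * (p i₀ j₀ : ℝ))
              - ((p i₀ i₀ : ℝ) + (p j₀ j₀ : ℝ) + (-1) * (p i₀ j₀ : ℝ)) := by ring
        rw [heq2]
        exact abs_sub _ _
      rw [abs_mul, habsN] at key
      have : |(2:ℝ)| = 2 := by norm_num
      rw [this] at key
      linarith
    have hσabs : |σ| = 1 := by rcases hσ with h | h <;> simp [h]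
    -- the shear matrix
    set M : Matrix (Fin ν) (Fin ν) ℝ := Matrix.transvection i₀ j₀ σ with hM
    set f : (Fin ν → ℝ) →ₗ[ℝ] (Fin ν → ℝ) := Matrix.toLin' M with hf
    have hdet : LinearMap.det f = 1 := by
      rw [hf, LinearMap.det_toLin']
      exact Matrix.det_transvection_of_ne i₀ j₀ hne σ
    have hmap : Measure.map f volume = volume := by
      rw [Real.map_linearMap_volume_pi_eq_smul_volume_pi (by rw [hdet]; norm_num)]
      rw [hdet]
      norm_num
    have hfcont : Continuous f := LinearMap.continuous_on_pi f
    have hfx : ∀ (x : Fin ν → ℝ) (k : Fin ν), f x k = x k + (if k = i₀ then σ * x j₀ else 0) := by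
      intro x k
      rw [hf, Matrix.toLin'_apply, hM, Matrix.transvection, Matrix.add_mulVec,
        Matrix.one_mulVec]
      simp only [Pi.add_apply]
      congr 1
      simp only [Matrix.mulVec, dotProduct, Matrix.single, Matrix.of_apply,
        ite_and, ite_mul, zero_mul]
      rcases eq_or_ne k i₀ with hk | hk
      · simp only [hk]
        simp
      · simp [hk]
        exact fun h => absurd h.symm hk
    have hvol : volume s = volume (f ⁻¹' s) := by
      conv_lhs => rw [← hmap]
      rw [Measure.map_apply hfcont.measurable hs]
    rw [hvol]
    refine pi_slice_bound j₀ (f ⁻¹' s) (hs.preimage hfcont.measurable) ?_ R ?_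
    · -- box bound
      intro x hx k
      have h1 : ∀ m : Fin ν, |f x m| ≤ 1 := fun m => hx.1 m
      have hb := h1 j₀
      rw [hfx x j₀, if_neg (Ne.symm hne), add_zero] at hb
      have ha2 := h1 k
      rw [hfx x k] at ha2
      by_cases hk : k = i₀
      · rw [if_pos hk] at ha2
        have h3 : |x k| ≤ |x k + σ * x j₀| + |σ * x j₀| := by
          have h4 := abs_add_le (x k + σ * x j₀) (-(σ * x j₀))
          simpa using h4
        rw [abs_mul, hσabs, one_mul] at h3
        linarith
      · rw [if_neg hk, add_zero] at ha2
        linarith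
    · -- slice bound
      intro Y
      set α : Fin ν → ℝ := f (Function.update Y j₀ 0) with hα
      set β : Fin ν → ℝ := f (Pi.single j₀ (1 : ℝ)) with hβ
      have hβval : ∀ k, β k = (if k = i₀ then σ else 0) + (if k = j₀ then 1 else 0) := by
        intro k
        rw [hβ, hfx]
        by_cases hk : k = i₀
        · rw [if_pos hk, if_pos hk, hk, if_neg hne, Pi.single_eq_of_ne hne,
            Pi.single_eq_same]
          all_goals ring
        · by_cases hk2 : k = j₀
          · rw [if_neg hk, if_neg hk, if_pos hk2, hk2, Pi.single_eq_same]
            all_goals ring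
          · rw [if_neg hk, if_neg hk, if_neg hk2, Pi.single_eq_of_ne hk2]
            all_goals ring
      obtain ⟨b, c, hbc⟩ := Qf_line p α β
      have ha : Qf p β = (p i₀ i₀ : ℝ) * σ ^ 2 + (p j₀ j₀ : ℝ)
          + (p i₀ j₀ : ℝ) * σ := by
        rw [Qf_support_pair p i₀ j₀ hlt β (fun k hk1 hk2 => by
          rw [hβval k, if_neg hk1, if_neg hk2]; ring)]
        rw [hβval i₀, hβval j₀, if_pos rfl, if_neg hne, if_neg (Ne.symm hne), if_pos rfl]
        ring
      have hσsq : σ ^ 2 = 1 := by rcases hσ with h | h <;> simp [h]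
      have habs : N ≤ |Qf p β| := by
        rw [ha, hσsq]
        calc N ≤ |(p i₀ i₀ : ℝ) + (p j₀ j₀ : ℝ) + σ * (p i₀ j₀ : ℝ)| := hσa
        _ = |(p i₀ i₀ : ℝ) * 1 + (p j₀ j₀ : ℝ) + (p i₀ j₀ : ℝ) * σ| := by ring_nf
      refine le_trans (measure_mono ?_) (hquad (Qf p β) b c habs)
      intro t ht
      simp only [Set.mem_setOf_eq, Set.mem_preimage] at ht ⊢
      rw [← hbc t]
      have hupd : (fun i => α i + β i * t) = f (Function.update Y j₀ t) := by
        rw [update_eq_line Y j₀ t, map_add, _root_.map_smul]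
        funext i
        simp [hα, hβ, mul_comm]
      rw [hupd]
      exact ht.2

lemma tsum_pi_prod_fin (n : ℕ) (g : ℤ → ℝ≥0∞) :
    ∑' q : Fin n → ℤ, ∏ e, g (q e) = (∑' z : ℤ, g z) ^ n := by
  induction n with
  | zero =>
    haveI : Subsingleton (Fin 0 → ℤ) := ⟨fun a b => funext fun i => i.elim0⟩
    rw [pow_zero]
    rw [tsum_eq_single (fun i => i.elim0) (fun b hb => absurd (Subsingleton.elim b _) hb)]
    simp
  | succ n ih =>
    have he := (Fin.consEquiv (fun _ : Fin (n + 1) => ℤ)).tsum_eq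
      (fun q : Fin (n + 1) → ℤ => ∏ e, g (q e))
    rw [← he]
    have hterm : ∀ pr : ℤ × (Fin n → ℤ),
        (∏ e, g ((Fin.consEquiv (fun _ : Fin (n + 1) => ℤ)) pr e))
          = g pr.1 * ∏ e, g (pr.2 e) := by
      intro pr
      have : (∏ e, g ((Fin.cons pr.1 pr.2 : Fin (n + 1) → ℤ) e)) = g pr.1 * ∏ e, g (pr.2 e) := by
        rw [Fin.prod_univ_succ]
        simp
      simpa [Fin.consEquiv] using this
    rw [tsum_congr hterm,
      ENNReal.tsum_prod (f := fun (z : ℤ) (q : Fin n → ℤ) => g z * ∏ e, g (q e))]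
    simp_rw [ENNReal.tsum_mul_left]
    rw [ENNReal.tsum_mul_right, ih, pow_succ]
    ring

lemma tsum_pi_prod {κ : Type*} [Fintype κ] (g : ℤ → ℝ≥0∞) :
    ∑' q : κ → ℤ, ∏ e, g (q e) = (∑' z : ℤ, g z) ^ (Fintype.card κ) := by
  classical
  set n := Fintype.card κ with hn
  obtain e := Fintype.equivFin κ
  set E : (Fin n → ℤ) ≃ (κ → ℤ) := Equiv.arrowCongr e.symm (Equiv.refl ℤ) with hE
  rw [← Equiv.tsum_eq E (fun q : κ → ℤ => ∏ k : κ, g (q k))]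
  rw [← tsum_pi_prod_fin n g]
  apply tsum_congr
  intro q
  have : ∀ k : κ, (E q) k = q (e k) := by
    intro k
    simp [hE, Equiv.arrowCongr]
  exact Fintype.prod_equiv e (fun k => g (E q k)) (fun i => g (q i))
    (fun k => by show g (E q k) = g (q (e k)); rw [this k])

lemma summable_max_rpow {r : ℝ} (hr : 1 < r) :
    Summable (fun z : ℤ => (max 1 |(z : ℝ)|) ^ (-r)) := by
  have hnat : Summable (fun n : ℕ => (max 1 (n : ℝ)) ^ (-r)) := by
    have h0 : Summable (fun n : ℕ => (n : ℝ) ^ (-r)) :=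
      Real.summable_nat_rpow.2 (by linarith)
    have h1 : Summable (fun n : ℕ => ((n + 1 : ℕ) : ℝ) ^ (-r)) :=
      (summable_nat_add_iff 1).2 h0
    have h2 : (fun n : ℕ => (max 1 ((n + 1 : ℕ) : ℝ)) ^ (-r))
        = fun n : ℕ => ((n + 1 : ℕ) : ℝ) ^ (-r) := by
      funext n
      rw [max_eq_right (by push_cast; linarith [Nat.cast_nonneg (α := ℝ) n])]
    exact (summable_nat_add_iff 1).1 (by rw [h2]; exact h1)
  apply Summable.of_nat_of_neg
  · convert hnat using 2 with n
    case e'_3 => rfl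
    case e'_5 => simp
  · convert hnat using 2 with n
    case e'_3 => rfl
    case e'_5 => simp

/-- Sup norm of an integer vector `p = (p_{ij})_{1 ≤ i ≤ j ≤ ν}` (entries with
`¬ i ≤ j` are ignored). -/
noncomputable def pSupNorm {ν : ℕ} (p : Fin ν → Fin ν → ℤ) : ℕ :=
  Finset.univ.sup fun q : Fin ν × Fin ν => if q.1 ≤ q.2 then (p q.1 q.2).natAbs else 0

/-- For `τ₀ > ν(ν+1) - 1`, the set of `ω` in the unit ball of `ℝ^ν` for which the
quadratic Diophantine condition
`|∑_{1≤i≤j≤ν} ω_i ω_j p_{ij}| ≥ γ₀ / |p|^{τ₀}` fails for some nonzero integer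
vector `p` has Lebesgue measure `O(γ₀^{1/2})`. -/
theorem quadratic_diophantine_measure
    (ν : ℕ) (hν : 1 ≤ ν) (τ₀ : ℝ) (hτ₀ : (ν : ℝ) * (ν + 1) - 1 < τ₀) :
    ∃ C : ℝ, 0 < C ∧ ∀ γ₀ : ℝ, γ₀ ∈ Set.Ioo (0 : ℝ) 1 →
      volume {ω : EuclideanSpace ℝ (Fin ν) | ‖ω‖ ≤ 1 ∧
          ∃ p : Fin ν → Fin ν → ℤ, (∃ i j, i ≤ j ∧ p i j ≠ 0) ∧
            |∑ i, ∑ j, if i ≤ j then (p i j : ℝ) * ω i * ω j else 0| <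
              γ₀ / (pSupNorm p : ℝ) ^ τ₀} ≤
        ENNReal.ofReal (C * Real.sqrt γ₀) := by
  classical
  have hν0 : 0 < ν := hν
  set d : ℕ := Fintype.card {q : Fin ν × Fin ν // q.1 ≤ q.2} with hd
  have hdcard : 2 * d = ν * (ν + 1) := by
    have h1 : d = Fintype.card (Sym2 (Fin ν)) :=
      (Fintype.card_congr (Sym2.sortEquiv (α := Fin ν))).symm
    rw [h1, Sym2.card, Fintype.card_fin, Nat.choose_two_right]
    simp only [Nat.add_sub_cancel]
    rw [Nat.mul_div_cancel' (by rw [Nat.mul_comm]; exact (Nat.even_mul_succ_self ν).two_dvd)]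
    ring
  have hd1 : 1 ≤ d := by
    rw [hd]
    have : Nonempty {q : Fin ν × Fin ν // q.1 ≤ q.2} :=
      ⟨⟨(⟨0, hν0⟩, ⟨0, hν0⟩), le_rfl⟩⟩
    exact Fintype.card_pos
  set β : ℝ := (τ₀ + 1) / 2 with hβ
  have hβd : (d : ℝ) < β := by
    have h2d : (2 : ℝ) * d = ν * (ν + 1) := by exact_mod_cast congrArg (Nat.cast (R := ℝ)) hdcard
    rw [hβ, lt_div_iff₀ (by norm_num : (0:ℝ) < 2)]
    nlinarith
  set r : ℝ := β / d with hrdef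
  have hdpos : (0 : ℝ) < d := by exact_mod_cast hd1
  have hr : 1 < r := by
    rw [hrdef, lt_div_iff₀ hdpos, one_mul]
    exact hβd
  have hrpos : 0 < r := lt_trans zero_lt_one hr
  set g : ℤ → ℝ≥0∞ := fun z => ENNReal.ofReal ((max 1 |(z : ℝ)|) ^ (-r)) with hg
  set Z : ℝ≥0∞ := ∑' z : ℤ, g z with hZdef
  have hZ : Z ≠ ⊤ := by
    rw [hZdef, hg]
    rw [← ENNReal.ofReal_tsum_of_nonneg
      (fun z => Real.rpow_nonneg (le_trans zero_le_one (le_max_left _ _)) _)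
      (summable_max_rpow hr)]
    exact ENNReal.ofReal_ne_top
  set K₀ : ℝ := 4 * 4 ^ (ν - 1) with hK₀
  have hK₀pos : 0 < K₀ := by positivity
  set W : ℝ := (Z ^ d).toReal with hW
  have hWnn : 0 ≤ W := ENNReal.toReal_nonneg
  refine ⟨K₀ * (W + 1), by positivity, ?_⟩
  intro γ₀ hγ
  obtain ⟨hγ0, hγ1⟩ := hγ
  set T := {p : Fin ν → Fin ν → ℤ //
    (∀ i j : Fin ν, ¬ i ≤ j → p i j = 0) ∧ ∃ i j, i ≤ j ∧ p i j ≠ 0} with hT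
  set Aset : T → Set (EuclideanSpace ℝ (Fin ν)) := fun P =>
    {ω | ‖ω‖ ≤ 1 ∧
      |∑ i, ∑ j, if i ≤ j then (P.1 i j : ℝ) * ω i * ω j else 0| <
        γ₀ / (pSupNorm P.1 : ℝ) ^ τ₀} with hAset
  have hsub : {ω : EuclideanSpace ℝ (Fin ν) | ‖ω‖ ≤ 1 ∧
      ∃ p : Fin ν → Fin ν → ℤ, (∃ i j, i ≤ j ∧ p i j ≠ 0) ∧
        |∑ i, ∑ j, if i ≤ j then (p i j : ℝ) * ω i * ω j else 0| <
          γ₀ / (pSupNorm p : ℝ) ^ τ₀} ⊆ ⋃ P : T, Aset P := by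
    rintro ω ⟨hω1, p, ⟨i, j, hij, hpij⟩, hlt⟩
    set q : Fin ν → Fin ν → ℤ := fun a b => if a ≤ b then p a b else 0 with hq
    have hq1 : ∀ a b : Fin ν, ¬ a ≤ b → q a b = 0 := fun a b h => if_neg h
    have hq2 : ∃ a b, a ≤ b ∧ q a b ≠ 0 := ⟨i, j, hij, by
      rw [hq]; simp only [if_pos hij]; exact hpij⟩
    have hqsum : (∑ i, ∑ j, if i ≤ j then (q i j : ℝ) * ω i * ω j else 0)
        = ∑ i, ∑ j, if i ≤ j then (p i j : ℝ) * ω i * ω j else 0 := by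
      refine Finset.sum_congr rfl fun a _ => Finset.sum_congr rfl fun b _ => ?_
      by_cases h : a ≤ b
      · rw [if_pos h, if_pos h, hq]; simp only [if_pos h]
      · rw [if_neg h, if_neg h]
    have hqsup : pSupNorm q = pSupNorm p := by
      unfold pSupNorm
      refine Finset.sup_congr rfl fun x _ => ?_
      by_cases h : x.1 ≤ x.2
      · rw [if_pos h, if_pos h, hq]; simp only [if_pos h]
      · rw [if_neg h, if_neg h]
    refine Set.mem_iUnion.2 ⟨⟨q, hq1, hq2⟩, hω1, ?_⟩
    simp only []
    rw [hqsum, hqsup]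
    exact hlt
  refine le_trans (measure_mono hsub) (le_trans (measure_iUnion_le _) ?_)
  have hper : ∀ P : T, volume (Aset P) ≤
      ENNReal.ofReal (K₀ * Real.sqrt γ₀) * ∏ e : {q : Fin ν × Fin ν // q.1 ≤ q.2},
        g (P.1 e.1.1 e.1.2) := by
    rintro ⟨p, hup, hnz⟩
    set N : ℕ := pSupNorm p with hNdef
    haveI : Nonempty (Fin ν) := ⟨⟨0, hν0⟩⟩
    have huniv : (Finset.univ : Finset (Fin ν × Fin ν)).Nonempty :=
      Finset.univ_nonempty (α := Fin ν × Fin ν)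
    obtain ⟨⟨i₀, j₀⟩, -, hMax⟩ := Finset.exists_mem_eq_sup (Finset.univ)
      huniv (fun q : Fin ν × Fin ν => if q.1 ≤ q.2 then (p q.1 q.2).natAbs else 0)
    dsimp only at hMax
    have hN1 : 1 ≤ N := by
      obtain ⟨i, j, hij, hne⟩ := hnz
      have hfle := Finset.le_sup (f := fun q : Fin ν × Fin ν =>
        if q.1 ≤ q.2 then (p q.1 q.2).natAbs else 0) (Finset.mem_univ (i, j))
      dsimp only at hfle
      rw [if_pos hij] at hfle
      exact le_trans (Nat.one_le_iff_ne_zero.2 (Int.natAbs_ne_zero.2 hne)) hfle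
    have hle : i₀ ≤ j₀ := by
      by_contra h
      rw [hNdef] at hN1
      unfold pSupNorm at hN1
      rw [hMax, if_neg h] at hN1
      omega
    have hNval : (p i₀ j₀).natAbs = N := by
      rw [hNdef]; unfold pSupNorm; rw [hMax, if_pos hle]
    have hp0 : p i₀ j₀ ≠ 0 := by
      intro h
      rw [h] at hNval
      simp at hNval
      omega
    have hmax' : ∀ i j : Fin ν, i ≤ j → (p i j).natAbs ≤ (p i₀ j₀).natAbs := by
      intro i j hij
      rw [hNval, hNdef]
      have hfle := Finset.le_sup (f := fun q : Fin ν × Fin ν =>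
        if q.1 ≤ q.2 then (p q.1 q.2).natAbs else 0) (Finset.mem_univ (i, j))
      dsimp only at hfle
      rw [if_pos hij] at hfle
      exact hfle
    set Nr : ℝ := (N : ℝ) with hNr
    have hNr1 : 1 ≤ Nr := by rw [hNr]; exact_mod_cast hN1
    have hNrpos : 0 < Nr := lt_of_lt_of_le zero_lt_one hNr1
    set ε : ℝ := γ₀ / Nr ^ τ₀ with hε
    have hεpos : 0 < ε := div_pos hγ0 (Real.rpow_pos_of_pos hNrpos _)
    set s' : Set (Fin ν → ℝ) := {x | (∀ k, |x k| ≤ 1) ∧ |Qf p x| < ε} with hs'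
    have hsub2 : Aset ⟨p, hup, hnz⟩ ⊆
        ((MeasurableEquiv.toLp 2 (Fin ν → ℝ)).symm) ⁻¹' s' := by
      rintro ω ⟨h1, h2⟩
      have hcoord : ∀ k, |ω k| ≤ 1 := by
        intro k
        have hk : |ω k| ≤ ‖ω‖ := by
          rw [EuclideanSpace.norm_eq, ← Real.sqrt_sq_eq_abs]
          apply Real.sqrt_le_sqrt
          have hs := Finset.single_le_sum (f := fun i => ‖ω i‖ ^ 2)
            (fun i _ => sq_nonneg _) (Finset.mem_univ k)
          calc ω k ^ 2 = ‖ω k‖ ^ 2 := by rw [Real.norm_eq_abs, sq_abs]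
          _ ≤ ∑ i, ‖ω i‖ ^ 2 := hs
        linarith
      refine ⟨hcoord, ?_⟩
      show |Qf p ((MeasurableEquiv.toLp 2 (Fin ν → ℝ)).symm ω)| < ε
      rw [hε, hNr, hNdef]
      exact h2
    have hstep : volume (Aset ⟨p, hup, hnz⟩) ≤ volume s' := by
      refine le_trans (measure_mono hsub2) ?_
      rw [(EuclideanSpace.volume_preserving_symm_measurableEquiv_toLp
        (Fin ν)).measure_preimage (Ap_measurable p ε).nullMeasurableSet]
    refine le_trans (le_trans hstep (Ap_pi_bound p i₀ j₀ hle hmax' hp0 hεpos)) ?_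
    have hcastN : ((p i₀ j₀).natAbs : ℝ) = Nr := by rw [hNval]
    rw [hcastN]
    have hεN : ε / Nr = γ₀ * Nr ^ (-(τ₀ + 1)) := by
      rw [hε, div_div, ← Real.rpow_add_one (ne_of_gt hNrpos),
        Real.rpow_neg hNrpos.le, div_eq_mul_inv]
    have hsqrt : Real.sqrt (ε / Nr) = Real.sqrt γ₀ * Nr ^ (-β) := by
      rw [hεN, Real.sqrt_mul hγ0.le]
      congr 1
      rw [Real.sqrt_eq_rpow, ← Real.rpow_mul hNrpos.le]
      congr 1
      rw [hβ]
      ring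
    have hofX : ENNReal.ofReal (Nr ^ (-β)) ≤
        ∏ e : {q : Fin ν × Fin ν // q.1 ≤ q.2}, g (p e.1.1 e.1.2) := by
      have hreal : Nr ^ (-β) ≤
          ∏ e : {q : Fin ν × Fin ν // q.1 ≤ q.2}, (max 1 |(p e.1.1 e.1.2 : ℝ)|) ^ (-r) := by
        rw [Real.finset_prod_rpow _ _
          (fun e _ => le_trans zero_le_one (le_max_left _ _)) _]
        have h1 : (∏ e : {q : Fin ν × Fin ν // q.1 ≤ q.2}, max 1 |(p e.1.1 e.1.2 : ℝ)|)
            ≤ Nr ^ d := by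
          calc (∏ e : {q : Fin ν × Fin ν // q.1 ≤ q.2}, max 1 |(p e.1.1 e.1.2 : ℝ)|)
              ≤ ∏ _e : {q : Fin ν × Fin ν // q.1 ≤ q.2}, Nr := by
                refine Finset.prod_le_prod (fun e _ => by positivity) (fun e _ => ?_)
                refine max_le hNr1 ?_
                rw [abs_intCast_natAbs]
                have := le_trans (hmax' e.1.1 e.1.2 e.2) (le_of_eq hNval)
                rw [hNr]
                exact_mod_cast this
          _ = Nr ^ d := by rw [Finset.prod_const, Finset.card_univ, ← hd]
        have h2 : (0:ℝ) < ∏ e : {q : Fin ν × Fin ν // q.1 ≤ q.2}, max 1 |(p e.1.1 e.1.2 : ℝ)| :=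
          Finset.prod_pos (fun e _ => lt_of_lt_of_le zero_lt_one (le_max_left _ _))
        have h3 : Nr ^ (-β) = (Nr ^ d) ^ (-r) := by
          rw [← Real.rpow_natCast Nr d, ← Real.rpow_mul hNrpos.le]
          congr 1
          rw [hrdef]
          field_simp
        rw [h3]
        exact Real.rpow_le_rpow_of_nonpos h2 h1 (by linarith)
      calc ENNReal.ofReal (Nr ^ (-β))
          ≤ ENNReal.ofReal (∏ e : {q : Fin ν × Fin ν // q.1 ≤ q.2},
            (max 1 |(p e.1.1 e.1.2 : ℝ)|) ^ (-r)) := ENNReal.ofReal_le_ofReal hreal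
      _ = ∏ e : {q : Fin ν × Fin ν // q.1 ≤ q.2},
            ENNReal.ofReal ((max 1 |(p e.1.1 e.1.2 : ℝ)|) ^ (-r)) :=
          ENNReal.ofReal_prod_of_nonneg
            (fun e _ => Real.rpow_nonneg (le_trans zero_le_one (le_max_left _ _)) _)
      _ = ∏ e : {q : Fin ν × Fin ν // q.1 ≤ q.2}, g (p e.1.1 e.1.2) := rfl
    calc ENNReal.ofReal (4 * Real.sqrt (ε / Nr)) * ENNReal.ofReal 4 ^ (ν - 1)
        = ENNReal.ofReal (4 * Real.sqrt (ε / Nr)) * ENNReal.ofReal (4 ^ (ν - 1)) := by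
          rw [ENNReal.ofReal_pow (by norm_num : (0:ℝ) ≤ 4)]
    _ = ENNReal.ofReal (4 * Real.sqrt (ε / Nr) * 4 ^ (ν - 1)) := by
          rw [← ENNReal.ofReal_mul (by positivity)]
    _ = ENNReal.ofReal ((K₀ * Real.sqrt γ₀) * Nr ^ (-β)) := by
          rw [hsqrt, hK₀]; congr 1; ring
    _ = ENNReal.ofReal (K₀ * Real.sqrt γ₀) * ENNReal.ofReal (Nr ^ (-β)) :=
          ENNReal.ofReal_mul (by positivity)
    _ ≤ ENNReal.ofReal (K₀ * Real.sqrt γ₀) * ∏ e : {q : Fin ν × Fin ν // q.1 ≤ q.2},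
          g (p e.1.1 e.1.2) := mul_le_mul_right hofX _
  refine le_trans (ENNReal.tsum_le_tsum hper) ?_
  rw [ENNReal.tsum_mul_left]
  have hinj : Function.Injective (fun P : T =>
      fun e : {q : Fin ν × Fin ν // q.1 ≤ q.2} => P.1 e.1.1 e.1.2) := by
    rintro ⟨p1, h1, hn1⟩ ⟨p2, h2, hn2⟩ hfe
    refine Subtype.ext (funext fun i => funext fun j => ?_)
    show p1 i j = p2 i j
    by_cases hij : i ≤ j
    · exact congrFun hfe ⟨(i, j), hij⟩
    · rw [h1 i j hij, h2 i j hij]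
  have hsum2 : (∑' P : T, ∏ e : {q : Fin ν × Fin ν // q.1 ≤ q.2}, g (P.1 e.1.1 e.1.2))
      ≤ Z ^ d := by
    calc (∑' P : T, ∏ e : {q : Fin ν × Fin ν // q.1 ≤ q.2}, g (P.1 e.1.1 e.1.2))
        ≤ ∑' q : {q : Fin ν × Fin ν // q.1 ≤ q.2} → ℤ,
            ∏ e : {q : Fin ν × Fin ν // q.1 ≤ q.2}, g (q e) :=
          ENNReal.tsum_comp_le_tsum_of_injective hinj
            (fun q : {q : Fin ν × Fin ν // q.1 ≤ q.2} → ℤ => ∏ e, g (q e))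
    _ = Z ^ d := by rw [tsum_pi_prod g, ← hZdef, ← hd]
  calc ENNReal.ofReal (K₀ * Real.sqrt γ₀)
        * ∑' P : T, ∏ e : {q : Fin ν × Fin ν // q.1 ≤ q.2}, g (P.1 e.1.1 e.1.2)
      ≤ ENNReal.ofReal (K₀ * Real.sqrt γ₀) * Z ^ d := mul_le_mul_right hsum2 _
  _ = ENNReal.ofReal (K₀ * Real.sqrt γ₀) * ENNReal.ofReal W := by
        rw [hW, ENNReal.ofReal_toReal (ENNReal.pow_ne_top hZ)]
  _ = ENNReal.ofReal (K₀ * Real.sqrt γ₀ * W) := (ENNReal.ofReal_mul (by positivity)).symm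
  _ ≤ ENNReal.ofReal (K₀ * (W + 1) * Real.sqrt γ₀) :=
        ENNReal.ofReal_le_ofReal (by nlinarith [Real.sqrt_nonneg γ₀])
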